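/- arXiv:1809.05446 — 3 statements merged into one kernel-verified Lean document; each statement's English description precedes it below -/
import Mathlib

section
/- For every k = 1,…,n such that s_{n−k} > 0, one has b_k = s_{n−k+1}/s_{n−k}, and for every k = 1,…,n−1 such that s_{n−k} > 0, one has g_k = s_{n−k−1}/s_{n−k}; that is, the suprema defining b_k and g_k are attained at i = k−1 and i = k+1 respectively. -/
noncomputable section

namespace StmtAux

open Multiset

lemma esymm_zero' (s : Multiset ℝ) : s.esymm 0 = 1 := by
  simp [Multiset.esymm, Multiset.powersetCard_zero_left]

lemma esymm_nil (k : ℕ) : (0 : Multiset ℝ).esymm (k+1) = 0 := by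
  simp [Multiset.esymm, Multiset.powersetCard_zero_right]

lemma esymm_cons (x : ℝ) (s : Multiset ℝ) (k : ℕ) :
    (x ::ₘ s).esymm (k+1) = s.esymm (k+1) + x * s.esymm k := by
  simp [Multiset.esymm, Multiset.powersetCard_cons, Multiset.map_map, Function.comp,
    Multiset.sum_map_mul_left]

/-- auxiliary: `eAux s k = esymm s (k-1)` with value `0` at `k = 0`. -/
def eAux (s : Multiset ℝ) : ℕ → ℝ
  | 0 => 0
  | (k+1) => s.esymm k

lemma esymm_cons' (x : ℝ) (s : Multiset ℝ) (k : ℕ) :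
    (x ::ₘ s).esymm k = s.esymm k + x * eAux s k := by
  cases k with
  | zero => simp [esymm_zero', eAux]
  | succ k => simp [esymm_cons, eAux]

lemma esymm_nonneg (s : Multiset ℝ) (hs : ∀ x ∈ s, 0 ≤ x) (k : ℕ) : 0 ≤ s.esymm k := by
  refine Multiset.sum_nonneg ?_
  intro a ha
  obtain ⟨t, ht, rfl⟩ := Multiset.mem_map.1 ha
  exact Multiset.prod_nonneg fun x hx =>
    hs x (Multiset.mem_of_le (Multiset.mem_powersetCard.1 ht).1 hx)

lemma eAux_nonneg (s : Multiset ℝ) (hs : ∀ x ∈ s, 0 ≤ x) (k : ℕ) : 0 ≤ eAux s k := by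
  cases k with
  | zero => simp [eAux]
  | succ k => exact esymm_nonneg s hs k

/-- The key rearrangement inequality for elementary symmetric functions of nonnegative
reals: `e_a e_b ≤ e_c e_d` whenever `a + b = c + d` and `a ≤ c ≤ d ≤ b`. -/
lemma key : ∀ (s : Multiset ℝ), (∀ x ∈ s, 0 ≤ x) →
    ∀ a b c d : ℕ, a + b = c + d → a ≤ c → c ≤ d → d ≤ b →
      s.esymm a * s.esymm b ≤ s.esymm c * s.esymm d := by
  intro s
  induction s using Multiset.induction_on with
  | empty =>
    intro _hs a b c d hsum hac hcd hdb
    have hnn : ∀ k, 0 ≤ (0 : Multiset ℝ).esymm k := by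
      intro k; cases k with
      | zero => simp [esymm_zero']
      | succ k => simp [esymm_nil]
    rcases Nat.eq_zero_or_pos b with hb | hb
    · have h0 : a = 0 ∧ c = 0 ∧ d = 0 := by omega
      obtain ⟨rfl, rfl, rfl⟩ := h0
      subst hb; simp
    · obtain ⟨b', rfl⟩ := Nat.exists_eq_succ_of_ne_zero (by omega : b ≠ 0)
      rw [esymm_nil, mul_zero]
      exact mul_nonneg (hnn c) (hnn d)
  | cons x s IH =>
    intro hs a b c d hsum hac hcd hdb
    have hx : 0 ≤ x := hs x (Multiset.mem_cons_self x s)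
    have hs' : ∀ y ∈ s, 0 ≤ y := fun y hy => hs y (Multiset.mem_cons_of_mem hy)
    have IH' := IH hs'
    have hnn : ∀ k, 0 ≤ s.esymm k := esymm_nonneg s hs'
    by_cases hac' : a = c
    · have hbd : b = d := by omega
      subst hac'; subst hbd; exact le_rfl
    have haclt : a < c := lt_of_le_of_ne hac hac'
    obtain ⟨c', rfl⟩ := Nat.exists_eq_succ_of_ne_zero (by omega : c ≠ 0)
    obtain ⟨d', rfl⟩ := Nat.exists_eq_succ_of_ne_zero (by omega : d ≠ 0)
    obtain ⟨b', rfl⟩ := Nat.exists_eq_succ_of_ne_zero (by omega : b ≠ 0)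
    have h1 : s.esymm a * s.esymm (b'+1) ≤ s.esymm (c'+1) * s.esymm (d'+1) :=
      IH' a (b'+1) (c'+1) (d'+1) hsum hac hcd hdb
    have h2 : eAux s a * eAux s (b'+1) ≤ eAux s (c'+1) * eAux s (d'+1) := by
      cases a with
      | zero =>
        simp only [eAux]
        rw [zero_mul]
        exact mul_nonneg (hnn c') (hnn d')
      | succ a' =>
        simp only [eAux]
        exact IH' a' b' c' d' (by omega) (by omega) (by omega) (by omega)
    have h3 : s.esymm a * eAux s (b'+1) + eAux s a * s.esymm (b'+1) ≤
        s.esymm (c'+1) * eAux s (d'+1) + eAux s (c'+1) * s.esymm (d'+1) := by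
      simp only [eAux]
      cases a with
      | zero =>
        simp only [eAux, zero_mul, add_zero]
        by_cases hcd2 : c' + 1 ≤ d'
        · have h4 := IH' 0 b' (c'+1) d' (by omega) (by omega) hcd2 (by omega)
          have h5 : 0 ≤ s.esymm c' * s.esymm (d'+1) := mul_nonneg (hnn c') (hnn (d'+1))
          linarith
        · have hdc : d' = c' := by omega
          subst hdc
          have h4 := IH' 0 b' d' (d'+1) (by omega) (by omega) (by omega) (by omega)
          have h5 : 0 ≤ s.esymm (d'+1) * s.esymm d' := mul_nonneg (hnn (d'+1)) (hnn d')
          linarith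
      | succ a' =>
        simp only [eAux]
        by_cases hcd2 : c' + 1 ≤ d'
        · have h4 := IH' (a'+1) b' (c'+1) d' (by omega) (by omega) hcd2 (by omega)
          have h5 := IH' a' (b'+1) c' (d'+1) (by omega) (by omega) (by omega) (by omega)
          linarith
        · have hdc : d' = c' := by omega
          subst hdc
          have h4 := IH' (a'+1) b' d' (d'+1) (by omega) (by omega) (by omega) (by omega)
          have h5 := IH' a' (b'+1) d' (d'+1) (by omega) (by omega) (by omega) (by omega)
          linarith
    rw [esymm_cons', esymm_cons', esymm_cons', esymm_cons']
    nlinarith [mul_le_mul_of_nonneg_left h3 hx,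
      mul_le_mul_of_nonneg_left h2 (mul_nonneg hx hx), h1]

/-- telescoped inequality for the `b_k` part: `s_{j+m} s_j^{m-1} ≤ s_{j+1}^m`. -/
lemma chainB (s : Multiset ℝ) (hs : ∀ x ∈ s, 0 ≤ x) :
    ∀ m, 1 ≤ m → ∀ j, s.esymm (j+m) * s.esymm j ^ (m-1) ≤ s.esymm (j+1) ^ m := by
  intro m hm
  induction m, hm using Nat.le_induction with
  | base => intro j; simp
  | succ m hm IH =>
    intro j
    obtain ⟨m', rfl⟩ := Nat.exists_eq_succ_of_ne_zero (by omega : m ≠ 0)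
    have hk := key s hs j (j + (m'+1) + 1) (j+1) (j + (m'+1)) (by omega) (by omega)
      (by omega) (by omega)
    have hIH := IH j
    simp only [Nat.add_sub_cancel] at hIH ⊢
    calc s.esymm (j + (m'+1+1)) * s.esymm j ^ (m'+1)
        = (s.esymm j * s.esymm (j + (m'+1) + 1)) * s.esymm j ^ m' := by
          have e1 : j + (m'+1+1) = j + (m'+1) + 1 := by omega
          rw [e1, pow_succ]; ring
      _ ≤ (s.esymm (j+1) * s.esymm (j + (m'+1))) * s.esymm j ^ m' :=
          mul_le_mul_of_nonneg_right hk (pow_nonneg (esymm_nonneg s hs j) m')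
      _ = s.esymm (j+1) * (s.esymm (j + (m'+1)) * s.esymm j ^ m') := by ring
      _ ≤ s.esymm (j+1) * s.esymm (j+1) ^ (m'+1) :=
          mul_le_mul_of_nonneg_left hIH (esymm_nonneg s hs (j+1))
      _ = s.esymm (j+1) ^ (m'+1+1) := by rw [pow_succ]; ring

/-- telescoped inequality for the `g_k` part: `s_{j-m} s_j^{m-1} ≤ s_{j-1}^m` for `m ≤ j`. -/
lemma chainG (s : Multiset ℝ) (hs : ∀ x ∈ s, 0 ≤ x) :
    ∀ m, 1 ≤ m → ∀ j, m ≤ j → s.esymm (j-m) * s.esymm j ^ (m-1) ≤ s.esymm (j-1) ^ m := by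
  intro m hm
  induction m, hm using Nat.le_induction with
  | base => intro j hj; simp
  | succ m hm IH =>
    intro j hj
    obtain ⟨m', rfl⟩ := Nat.exists_eq_succ_of_ne_zero (by omega : m ≠ 0)
    have hk := key s hs (j - (m'+1) - 1) j (j - (m'+1)) (j-1) (by omega) (by omega)
      (by omega) (by omega)
    have hIH := IH j (by omega)
    simp only [Nat.add_sub_cancel] at hIH ⊢
    have harith : j - (m'+1+1) = j - (m'+1) - 1 := by omega
    rw [harith]
    calc s.esymm (j - (m'+1) - 1) * s.esymm j ^ (m'+1)
        = (s.esymm (j - (m'+1) - 1) * s.esymm j) * s.esymm j ^ m' := by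
          rw [pow_succ]; ring
      _ ≤ (s.esymm (j - (m'+1)) * s.esymm (j-1)) * s.esymm j ^ m' :=
          mul_le_mul_of_nonneg_right hk (pow_nonneg (esymm_nonneg s hs j) m')
      _ = s.esymm (j-1) * (s.esymm (j - (m'+1)) * s.esymm j ^ m') := by ring
      _ ≤ s.esymm (j-1) * s.esymm (j-1) ^ (m'+1) :=
          mul_le_mul_of_nonneg_left hIH (esymm_nonneg s hs (j-1))
      _ = s.esymm (j-1) ^ (m'+1+1) := by rw [pow_succ]; ring

lemma rpow_trick (x v : ℝ) (hx : 0 ≤ x) (hv : 0 ≤ v) (m : ℕ) (hm : 1 ≤ m)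
    (h : x ≤ v ^ m) : x ^ ((1:ℝ)/(m:ℝ)) ≤ v := by
  have hm' : (m:ℝ) ≠ 0 := by positivity
  calc x ^ ((1:ℝ)/(m:ℝ)) ≤ ((v ^ m : ℝ)) ^ ((1:ℝ)/(m:ℝ)) :=
        Real.rpow_le_rpow hx h (by positivity)
    _ = v := by
        rw [← Real.rpow_natCast v m, ← Real.rpow_mul hv, mul_one_div, div_self hm',
          Real.rpow_one]

end StmtAux

/-- The `k`-th elementary symmetric function of `σ₁, …, σ_n` (with value `1` for `k = 0`). -/
def esym (n : ℕ) (σ : Fin n → ℝ) (k : ℕ) : ℝ :=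
  ∑ t ∈ Finset.univ.powersetCard k, ∏ i ∈ t, σ i

/-- `b_k = sup_{0 ≤ i ≤ k−1} (s_{n−i}/s_{n−k})^{1/(k−i)}`. -/
def bq (n : ℕ) (σ : Fin n → ℝ) (k : ℕ) : ℝ :=
  ⨆ i : Fin k, (esym n σ (n - (i : ℕ)) / esym n σ (n - k)) ^ ((1 : ℝ) / ((k : ℝ) - (i : ℕ)))

/-- `g_k = sup_{k+1 ≤ i ≤ n} (s_{n−i}/s_{n−k})^{1/(i−k)}` for `k < n`, and `g_n = 1`. -/
def gq (n : ℕ) (σ : Fin n → ℝ) (k : ℕ) : ℝ :=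
  if k = n then 1
  else ⨆ j : Fin (n - k),
    (esym n σ (n - (k + 1 + (j : ℕ))) / esym n σ (n - k)) ^ ((1 : ℝ) / ((j : ℕ) + 1))

/-- `a_k = b_k · g_k`. -/
def aq (n : ℕ) (σ : Fin n → ℝ) (k : ℕ) : ℝ := bq n σ k * gq n σ k

namespace StmtAux

lemma esym_eq (n : ℕ) (σ : Fin n → ℝ) (k : ℕ) :
    esym n σ k = (Multiset.map σ Finset.univ.val).esymm k := by
  rw [esym]
  exact (Finset.esymm_map_val σ Finset.univ k).symm

end StmtAux

/-- For every `k = 1,…,n` with `s_{n−k} > 0` one has `b_k = s_{n−k+1}/s_{n−k}`, and for every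
`k = 1,…,n−1` with `s_{n−k} > 0` one has `g_k = s_{n−k−1}/s_{n−k}`: the suprema defining `b_k`
and `g_k` are attained at `i = k−1` and `i = k+1` respectively. -/
theorem stmt0 (n : ℕ) (hn : 1 ≤ n) (σ : Fin n → ℝ)
    (hdec : Antitone σ) (hnonneg : ∀ i, 0 ≤ σ i) :
    (∀ k, 1 ≤ k → k ≤ n → 0 < esym n σ (n - k) →
      bq n σ k = esym n σ (n - k + 1) / esym n σ (n - k)) ∧
    (∀ k, 1 ≤ k → k ≤ n - 1 → 0 < esym n σ (n - k) →
      gq n σ k = esym n σ (n - k - 1) / esym n σ (n - k)) := by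
  classical
  set M : Multiset ℝ := Multiset.map σ Finset.univ.val with hM
  have hMnn : ∀ x ∈ M, 0 ≤ x := by
    intro x hx
    obtain ⟨i, _, rfl⟩ := Multiset.mem_map.1 hx
    exact hnonneg i
  have hesym : ∀ k, esym n σ k = M.esymm k := fun k => StmtAux.esym_eq n σ k
  have hesym_nn : ∀ k, 0 ≤ esym n σ k := by
    intro k; rw [hesym]; exact StmtAux.esymm_nonneg M hMnn k
  constructor
  · -- the b_k part
    intro k hk1 hkn h0
    have hP : 0 < esym n σ (n - k) := h0
    have hne : Nonempty (Fin k) := ⟨⟨0, hk1⟩⟩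
    set v : ℝ := esym n σ (n - k + 1) / esym n σ (n - k) with hv
    have hv0 : 0 ≤ v := div_nonneg (hesym_nn _) hP.le
    apply le_antisymm
    · apply ciSup_le
      intro i
      set m : ℕ := k - (i : ℕ) with hm
      have hm1 : 1 ≤ m := by omega
      have hcast : ((k : ℝ) - ((i : ℕ) : ℝ)) = (m : ℝ) := by
        rw [hm]
        push_cast [Nat.cast_sub (le_of_lt i.isLt)]
        ring
      rw [hcast]
      -- chain inequality
      have hchain := StmtAux.chainB M hMnn m hm1 (n - k)
      have harith : n - k + m = n - (i : ℕ) := by omega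
      rw [harith] at hchain
      rw [← hesym, ← hesym, ← hesym] at hchain
      -- deduce the divided version
      have hxle : esym n σ (n - (i : ℕ)) / esym n σ (n - k) ≤ v ^ m := by
        rw [hv, div_pow, div_le_div_iff₀ hP (pow_pos hP m)]
        have h5 := mul_le_mul_of_nonneg_right hchain hP.le
        have h6 : esym n σ (n - k) ^ (m - 1) * esym n σ (n - k)
            = esym n σ (n - k) ^ m := by
          have hms : m - 1 + 1 = m := by omega
          rw [← pow_succ, hms]
        calc esym n σ (n - (i : ℕ)) * esym n σ (n - k) ^ m
            = esym n σ (n - (i : ℕ)) * esym n σ (n - k) ^ (m-1) * esym n σ (n - k) := by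
              rw [mul_assoc, h6]
          _ ≤ esym n σ (n - k + 1) ^ m * esym n σ (n - k) := h5
      exact StmtAux.rpow_trick _ v (div_nonneg (hesym_nn _) hP.le) hv0 m hm1 hxle
    · -- v is attained at i = k - 1
      have hklt : k - 1 < k := by omega
      have := le_ciSup (Set.Finite.bddAbove (Set.finite_range
        (fun i : Fin k => (esym n σ (n - (i : ℕ)) / esym n σ (n - k)) ^
          ((1 : ℝ) / ((k : ℝ) - (i : ℕ)))))) (⟨k - 1, hklt⟩ : Fin k)
      refine le_trans (le_of_eq ?_) this
      have h1 : n - (k - 1) = n - k + 1 := by omega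
      have h2 : ((k : ℝ) - ((k - 1 : ℕ) : ℝ)) = 1 := by
        push_cast [Nat.cast_sub hk1]
        ring
      simp only [h1, h2, div_one, Real.rpow_one]
      exact hv
  · -- the g_k part
    intro k hk1 hkn h0
    have hP : 0 < esym n σ (n - k) := h0
    have hkn' : k ≠ n := by omega
    have hnk : 0 < n - k := by omega
    have hne : Nonempty (Fin (n - k)) := ⟨⟨0, hnk⟩⟩
    rw [gq, if_neg hkn']
    set v : ℝ := esym n σ (n - k - 1) / esym n σ (n - k) with hv
    have hv0 : 0 ≤ v := div_nonneg (hesym_nn _) hP.le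
    apply le_antisymm
    · apply ciSup_le
      intro j
      set m : ℕ := (j : ℕ) + 1 with hm
      have hm1 : 1 ≤ m := by omega
      have hmle : m ≤ n - k := by
        have := j.isLt
        omega
      have hcast : (((j : ℕ) : ℝ) + 1) = (m : ℝ) := by rw [hm]; norm_cast
      rw [hcast]
      have hchain := StmtAux.chainG M hMnn m hm1 (n - k) hmle
      have harith : n - k - m = n - (k + 1 + (j : ℕ)) := by omega
      rw [harith] at hchain
      rw [← hesym, ← hesym, ← hesym] at hchain
      have hxle : esym n σ (n - (k + 1 + (j : ℕ))) / esym n σ (n - k) ≤ v ^ m := by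
        rw [hv, div_pow, div_le_div_iff₀ hP (pow_pos hP m)]
        have h5 := mul_le_mul_of_nonneg_right hchain hP.le
        have h6 : esym n σ (n - k) ^ (m - 1) * esym n σ (n - k)
            = esym n σ (n - k) ^ m := by
          have hms : m - 1 + 1 = m := by omega
          rw [← pow_succ, hms]
        calc esym n σ (n - (k + 1 + (j : ℕ))) * esym n σ (n - k) ^ m
            = esym n σ (n - (k + 1 + (j : ℕ))) * esym n σ (n - k) ^ (m-1)
                * esym n σ (n - k) := by rw [mul_assoc, h6]
          _ ≤ esym n σ (n - k - 1) ^ m * esym n σ (n - k) := h5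
      exact StmtAux.rpow_trick _ v (div_nonneg (hesym_nn _) hP.le) hv0 m hm1 hxle
    · have := le_ciSup (Set.Finite.bddAbove (Set.finite_range
        (fun j : Fin (n - k) => (esym n σ (n - (k + 1 + (j : ℕ))) / esym n σ (n - k)) ^
          ((1 : ℝ) / (((j : ℕ) : ℝ) + 1))))) (⟨0, hnk⟩ : Fin (n - k))
      refine le_trans (le_of_eq ?_) this
      have hval : ((⟨0, hnk⟩ : Fin (n - k)) : ℕ) = 0 := rfl
      rw [hval]
      have h1 : n - (k + 1 + (0 : ℕ)) = n - k - 1 := by omega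
      rw [h1]
      norm_num
      exact hv
end
end

section
/- Let 1 ≤ m ≤ n with s_{n−m} > 0, and define the polynomial q(λ) = Σ_{i=m}^{n} (−1)^{n−i} (s_{n−i}/s_{n−m}) λ^i. Then for every λ ∈ ℂ with t := g_m·|λ| < 1 one has |q(λ)| ≥ |λ|^m · (1 − 2t)/(1 − t). -/
noncomputable section

lemma esym_nonneg (n : ℕ) (σ : Fin n → ℝ) (hnonneg : ∀ i, 0 ≤ σ i) (k : ℕ) :
    0 ≤ esym n σ k := by
  apply Finset.sum_nonneg
  intro t _
  exact Finset.prod_nonneg fun i _ => hnonneg i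

lemma gq_nonneg (n : ℕ) (σ : Fin n → ℝ) (hnonneg : ∀ i, 0 ≤ σ i) (k : ℕ) :
    0 ≤ gq n σ k := by
  unfold gq
  split
  · norm_num
  · apply Real.iSup_nonneg
    intro j
    exact Real.rpow_nonneg (div_nonneg (esym_nonneg n σ hnonneg _)
      (esym_nonneg n σ hnonneg _)) _

/-- The key bound: `s_{n-i}/s_{n-m} ≤ g_m^(i-m)` for `m < i ≤ n`. -/
lemma ratio_le_gq_pow (n : ℕ) (σ : Fin n → ℝ) (hnonneg : ∀ i, 0 ≤ σ i)
    (m : ℕ) (hs : 0 < esym n σ (n - m)) (i : ℕ) (hi1 : m + 1 ≤ i) (hi2 : i ≤ n) :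
    esym n σ (n - i) / esym n σ (n - m) ≤ gq n σ m ^ (i - m) := by
  have hmn : m < n := lt_of_lt_of_le hi1 hi2
  set j : ℕ := i - (m + 1) with hj
  have hij : i = m + 1 + j := by omega
  have hjlt : j < n - m := by omega
  have hratio : (0 : ℝ) ≤ esym n σ (n - i) / esym n σ (n - m) :=
    div_nonneg (esym_nonneg n σ hnonneg _) hs.le
  have hkey : (esym n σ (n - i) / esym n σ (n - m)) ^ ((1 : ℝ) / (j + 1)) ≤ gq n σ m := by
    have : gq n σ m = ⨆ j : Fin (n - m),
        (esym n σ (n - (m + 1 + (j : ℕ))) / esym n σ (n - m)) ^ ((1 : ℝ) / ((j : ℕ) + 1)) := by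
      unfold gq; rw [if_neg (by omega)]
    rw [this]
    have := le_ciSup (f := fun j : Fin (n - m) =>
        (esym n σ (n - (m + 1 + (j : ℕ))) / esym n σ (n - m)) ^ ((1 : ℝ) / ((j : ℕ) + 1)))
      (Set.Finite.bddAbove (Set.finite_range _)) ⟨j, hjlt⟩
    simpa [← hij] using this
  have hje : ((j : ℝ) + 1) ≠ 0 := by positivity
  calc esym n σ (n - i) / esym n σ (n - m)
      = ((esym n σ (n - i) / esym n σ (n - m)) ^ ((1 : ℝ) / (j + 1))) ^ (j + 1) := by
        rw [← Real.rpow_natCast ((esym n σ (n - i) / esym n σ (n - m)) ^ ((1 : ℝ) / (j + 1))) (j + 1),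
          ← Real.rpow_mul hratio]
        push_cast
        rw [one_div_mul_cancel hje, Real.rpow_one]
    _ ≤ gq n σ m ^ (j + 1) := pow_le_pow_left₀ (Real.rpow_nonneg hratio _) hkey _
    _ = gq n σ m ^ (i - m) := by congr 1; omega

lemma geom_tail_le {t : ℝ} (ht0 : 0 ≤ t) (ht1 : t < 1) (N : ℕ) :
    ∑ k ∈ Finset.Icc 1 N, t ^ k ≤ t / (1 - t) := by
  have h1t : 0 < 1 - t := by linarith
  have hsum : ∑ k ∈ Finset.Icc 1 N, t ^ k = t * ∑ k ∈ Finset.range N, t ^ k := by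
    rw [← Finset.Ico_add_one_right_eq_Icc, Finset.sum_Ico_eq_sum_range, Finset.mul_sum,
      Nat.add_sub_cancel]
    apply Finset.sum_congr rfl
    intro k _
    rw [add_comm 1 k, pow_succ]
    ring
  rw [hsum]
  have hgeom : (∑ k ∈ Finset.range N, t ^ k) * (t - 1) = t ^ N - 1 := geom_sum_mul t N
  have hpow : 0 ≤ t ^ N := pow_nonneg ht0 N
  have hrange : ∑ k ∈ Finset.range N, t ^ k ≤ 1 / (1 - t) := by
    rw [le_div_iff₀ h1t]
    nlinarith
  calc t * ∑ k ∈ Finset.range N, t ^ k ≤ t * (1 / (1 - t)) :=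
        mul_le_mul_of_nonneg_left hrange ht0
    _ = t / (1 - t) := by ring

/-- Let `1 ≤ m ≤ n` with `s_{n−m} > 0` and let
`q(λ) = Σ_{i=m}^{n} (−1)^{n−i} (s_{n−i}/s_{n−m}) λ^i`.  Then for every `λ ∈ ℂ` with
`t := g_m·|λ| < 1` one has `|q(λ)| ≥ |λ|^m · (1 − 2t)/(1 − t)`. -/
theorem stmt1 (n : ℕ) (hn : 1 ≤ n) (σ : Fin n → ℝ)
    (hdec : Antitone σ) (hnonneg : ∀ i, 0 ≤ σ i)
    (m : ℕ) (hm1 : 1 ≤ m) (hmn : m ≤ n) (hs : 0 < esym n σ (n - m))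
    (z : ℂ) (ht : gq n σ m * ‖z‖ < 1) :
    ‖z‖ ^ m * (1 - 2 * (gq n σ m * ‖z‖)) / (1 - gq n σ m * ‖z‖) ≤
      ‖(∑ i ∈ Finset.Icc m n,
        (-1 : ℂ) ^ (n - i) * ((esym n σ (n - i) / esym n σ (n - m) : ℝ) : ℂ) * z ^ i)‖ := by
  set g := gq n σ m with hg
  set r := ‖z‖ with hr
  have hr0 : 0 ≤ r := norm_nonneg z
  have hg0 : 0 ≤ g := gq_nonneg n σ hnonneg m
  set t := g * r with htdef
  have ht0 : 0 ≤ t := mul_nonneg hg0 hr0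
  have h1t : 0 < 1 - t := by linarith
  set F : ℕ → ℂ := fun i =>
    (-1 : ℂ) ^ (n - i) * ((esym n σ (n - i) / esym n σ (n - m) : ℝ) : ℂ) * z ^ i with hF
  -- split off the first term
  have hsplit : ∑ i ∈ Finset.Icc m n, F i = F m + ∑ i ∈ Finset.Icc (m + 1) n, F i := by
    rw [← Finset.Ioc_insert_left hmn, Finset.sum_insert (by simp), Finset.Icc_add_one_left_eq_Ioc]
  have hFm : ‖F m‖ = r ^ m := by
    simp only [hF, norm_mul, norm_pow, Complex.norm_real, Real.norm_eq_abs, abs_of_pos hs,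
      div_self hs.ne', norm_neg, norm_one, one_pow, abs_one, one_mul]
    norm_num [hr]
  -- bound for the tail
  have htail : ‖∑ i ∈ Finset.Icc (m + 1) n, F i‖ ≤ r ^ m * (t / (1 - t)) := by
    calc ‖∑ i ∈ Finset.Icc (m + 1) n, F i‖
        ≤ ∑ i ∈ Finset.Icc (m + 1) n, ‖F i‖ := by
          exact norm_sum_le _ _
      _ ≤ ∑ i ∈ Finset.Icc (m + 1) n, r ^ m * t ^ (i - m) := by
          apply Finset.sum_le_sum
          intro i hi
          rw [Finset.mem_Icc] at hi
          have hratio : (0 : ℝ) ≤ esym n σ (n - i) / esym n σ (n - m) :=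
            div_nonneg (esym_nonneg n σ hnonneg _) hs.le
          have hFabs : ‖F i‖ = (esym n σ (n - i) / esym n σ (n - m)) * r ^ i := by
            simp only [hF, norm_mul, norm_pow, Complex.norm_real, Real.norm_eq_abs, norm_neg, norm_one, abs_one,
              one_pow, one_mul, _root_.abs_of_nonneg hratio]
            norm_num [hr]
          rw [hFabs]
          have hle : esym n σ (n - i) / esym n σ (n - m) ≤ g ^ (i - m) :=
            ratio_le_gq_pow n σ hnonneg m hs i hi.1 hi.2
          have hri : r ^ i = r ^ m * r ^ (i - m) := by
            rw [← pow_add]; congr 1; omega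
          calc (esym n σ (n - i) / esym n σ (n - m)) * r ^ i
              ≤ g ^ (i - m) * r ^ i :=
                mul_le_mul_of_nonneg_right hle (pow_nonneg hr0 i)
            _ = r ^ m * t ^ (i - m) := by
                rw [hri, htdef, mul_pow]; ring
      _ = r ^ m * ∑ k ∈ Finset.Icc 1 (n - m), t ^ k := by
          rw [← Finset.mul_sum]
          congr 1
          have : Finset.Icc (m + 1) n = Finset.map (addLeftEmbedding m) (Finset.Icc 1 (n - m)) := by
            rw [Finset.map_add_left_Icc]
            congr 1 <;> omega
          rw [this, Finset.sum_map]
          apply Finset.sum_congr rfl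
          intro k hk
          simp only [addLeftEmbedding_apply]
          congr 1
          omega
      _ ≤ r ^ m * (t / (1 - t)) :=
          mul_le_mul_of_nonneg_left (geom_tail_le ht0 (by linarith) _) (pow_nonneg hr0 m)
  -- reverse triangle inequality
  have hmain : r ^ m - r ^ m * (t / (1 - t)) ≤ ‖∑ i ∈ Finset.Icc m n, F i‖ := by
    rw [hsplit]
    have h1 : ‖F m‖ ≤ ‖F m + ∑ i ∈ Finset.Icc (m + 1) n, F i‖
        + ‖∑ i ∈ Finset.Icc (m + 1) n, F i‖ := by
      have := norm_add_le (F m + ∑ i ∈ Finset.Icc (m + 1) n, F i)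
        (-(∑ i ∈ Finset.Icc (m + 1) n, F i))
      simpa using this
    rw [hFm] at h1
    linarith
  have heq : r ^ m * (1 - 2 * t) / (1 - t) = r ^ m - r ^ m * (t / (1 - t)) := by
    field_simp
    ring
  rw [heq]
  exact hmain
end
end

section
/- For every integer p ≥ 1 and every real u with 0 ≤ u < 2/(p + 1), one has 1/(1 − u)^p − 1 ≤ p·u / (1 − ((p + 1)/2)·u). -/
lemma aux17 (p : ℕ) (u : ℝ) (hu0 : 0 ≤ u) (hu1 : u ≤ 1) :
    1 - ((p : ℝ) + 1) * u / 2 ≤ (1 - u) ^ p * (1 + ((p : ℝ) - 1) * u / 2) := by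
  induction p with
  | zero => norm_num; linarith
  | succ p ih =>
    have h1 : (0 : ℝ) ≤ 1 - u := by linarith
    have hpn : (0 : ℝ) ≤ (p : ℝ) := Nat.cast_nonneg p
    have h2 : (0 : ℝ) ≤ 1 + (p : ℝ) * u / 2 := by nlinarith
    have hc : (0 : ℝ) < 1 + ((p : ℝ) - 1) * u / 2 := by nlinarith
    -- multiply ih by (1-u)*(1+pu/2) ≥ 0
    have key : (1 - u) * (1 + (p : ℝ) * u / 2) * (1 - ((p : ℝ) + 1) * u / 2)
        ≤ (1 - u) ^ (p + 1) * (1 + (p : ℝ) * u / 2) * (1 + ((p : ℝ) - 1) * u / 2) := by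
      have := mul_le_mul_of_nonneg_left ih (mul_nonneg h1 h2)
      ring_nf at this ⊢
      linarith [this]
    have poly : (1 - ((p : ℝ) + 2) * u / 2) * (1 + ((p : ℝ) - 1) * u / 2)
        ≤ (1 - u) * (1 + (p : ℝ) * u / 2) * (1 - ((p : ℝ) + 1) * u / 2) := by
      nlinarith [mul_nonneg (mul_nonneg hu0 hu0) hu0, mul_nonneg (mul_nonneg (mul_nonneg hpn hpn) hu0) (mul_nonneg (mul_nonneg hu0 hu0) hu0)]
    have := (mul_le_mul_iff_of_pos_right hc).mp (le_trans poly key)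
    push_cast
    linarith [this]

/-- For every integer `p ≥ 1` and every real `u` with `0 ≤ u < 2/(p+1)`, one has
`1/(1−u)^p − 1 ≤ p·u/(1 − ((p+1)/2)·u)`. -/
theorem stmt17 (p : ℕ) (hp : 1 ≤ p) (u : ℝ) (hu0 : 0 ≤ u) (hu : u < 2 / ((p : ℝ) + 1)) :
    1 / (1 - u) ^ p - 1 ≤ (p : ℝ) * u / (1 - (((p : ℝ) + 1) / 2) * u) := by
  have hp1 : (0 : ℝ) < (p : ℝ) + 1 := by positivity
  have hpu : u * ((p : ℝ) + 1) < 2 := (lt_div_iff₀ hp1).mp hu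
  have hp1' : (1 : ℝ) ≤ (p : ℝ) := by exact_mod_cast hp
  have hu1 : u < 1 := by nlinarith
  have hD : (0 : ℝ) < 1 - (((p : ℝ) + 1) / 2) * u := by nlinarith
  have hP : (0 : ℝ) < (1 - u) ^ p := pow_pos (by linarith) p
  have h := aux17 p u hu0 hu1.le
  have h2 : 1 / (1 - u) ^ p ≤ (1 - (((p : ℝ) + 1) / 2) * u + (p : ℝ) * u) / (1 - (((p : ℝ) + 1) / 2) * u) := by
    rw [div_le_div_iff₀ hP hD]
    nlinarith [h]
  rw [add_div, div_self hD.ne'] at h2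
  linarith
end
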